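/- arXiv:1006.4302 — 3 statements merged into one kernel-verified Lean document; each statement's English description precedes it below -/
import Mathlib

section
/- Let M be a topological space and f : M → M a continuous map. If x ∈ M_F is a nonwandering point of the shift F : M_F → M_F, then every coordinate x_j (j ∈ ℤ) is a nonwandering point of f. In other words, the nonwandering set of F is contained in Ω_f^ℤ ∩ M_F, where Ω_f denotes the nonwandering set of f. -/
/-- The nonwandering set of a self-map `g` of a topological space: the points `x` such
that for every neighborhood `U` of `x` there is `n ≥ 1` with `g^n(U) ∩ U ≠ ∅`. -/
def nonwanderingSet {X : Type*} [TopologicalSpace X] (g : X → X) : Set X :=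
  {x : X | ∀ U : Set X, IsOpen U → x ∈ U → ∃ n : ℕ, 1 ≤ n ∧ (g^[n] '' U ∩ U).Nonempty}

/-- The shift map `F` on the inverse limit `M_F = { x ∈ M^ℤ | f(x_i) = x_{i+1} }`. -/
def shiftMap {M : Type*} (f : M → M)
    (x : {x : ℤ → M // ∀ i : ℤ, f (x i) = x (i + 1)}) :
    {x : ℤ → M // ∀ i : ℤ, f (x i) = x (i + 1)} :=
  ⟨fun i => x.val (i + 1), fun i => x.property (i + 1)⟩

lemma shiftMap_iterate {M : Type*} (f : M → M)
    (y : {x : ℤ → M // ∀ i : ℤ, f (x i) = x (i + 1)}) (n : ℕ) (i : ℤ) :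
    ((shiftMap f)^[n] y).val i = y.val (i + n) := by
  induction n generalizing y i with
  | zero => simp
  | succ n ih =>
      rw [Function.iterate_succ_apply, ih]
      show y.val (i + n + 1) = _
      congr 1
      push_cast
      ring

lemma iterate_coord {M : Type*} (f : M → M)
    (y : {x : ℤ → M // ∀ i : ℤ, f (x i) = x (i + 1)}) (n : ℕ) (j : ℤ) :
    f^[n] (y.val j) = y.val (j + n) := by
  induction n with
  | zero => simp
  | succ n ih =>
      rw [Function.iterate_succ_apply', ih, y.property (j + n)]
      congr 1
      push_cast
      ring

/-- If `x ∈ M_F` is a nonwandering point of the shift `F : M_F → M_F`, then every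
coordinate `x_j` (`j ∈ ℤ`) is a nonwandering point of `f`; that is, the nonwandering set
of `F` is contained in `Ω_f^ℤ ∩ M_F`. -/
theorem nonwandering_shift_subset
    {M : Type*} [TopologicalSpace M] (f : M → M) (hf : Continuous f)
    (x : {x : ℤ → M // ∀ i : ℤ, f (x i) = x (i + 1)})
    (hx : x ∈ nonwanderingSet (shiftMap f)) :
    ∀ j : ℤ, x.val j ∈ nonwanderingSet f := by
  intro j U hU hxU
  have hproj : Continuous
      (fun z : {x : ℤ → M // ∀ i : ℤ, f (x i) = x (i + 1)} => z.val j) :=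
    (continuous_apply j).comp continuous_subtype_val
  obtain ⟨n, hn1, ⟨z, ⟨y, hyV, hyz⟩, hzV⟩⟩ :=
    hx ((fun z => z.val j) ⁻¹' U) (hU.preimage hproj) hxU
  refine ⟨n, hn1, y.val (j + n), ⟨y.val j, hyV, iterate_coord f y n j⟩, ?_⟩
  have : z.val j = y.val (j + n) := by rw [← hyz, shiftMap_iterate]
  rw [← this]; exact hzV
end

section
/- Let M be a nonempty compact metric space and f : M → M a continuous map. Then every nonwandering point of f belongs to the global attractor: Ω_f ⊆ M_f = ⋂_{n≥0} f^n(M). -/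
/-- For a continuous self-map `f` of a nonempty compact metric space `M`, every
nonwandering point belongs to the global attractor: `Ω_f ⊆ M_f = ⋂_{n ≥ 0} f^n(M)`. -/
theorem nonwandering_subset_global_attractor
    {M : Type*} [MetricSpace M] [CompactSpace M] [Nonempty M]
    (f : M → M) (hf : Continuous f) :
    nonwanderingSet f ⊆ ⋂ n : ℕ, f^[n] '' Set.univ := by
  intro x hx
  simp only [Set.mem_iInter]
  intro n
  rcases Nat.eq_zero_or_pos n with rfl | hn
  · exact ⟨x, trivial, rfl⟩
  have hKmono : ∀ a b : ℕ, b ≤ a → f^[a] '' Set.univ ⊆ f^[b] '' Set.univ := by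
    intro a b hba z hz
    obtain ⟨y, -, rfl⟩ := hz
    refine ⟨f^[a - b] y, trivial, ?_⟩
    rw [← Function.iterate_add_apply]
    congr 1
    omega
  have hKcl : IsClosed (f^[n] '' Set.univ) :=
    (isCompact_univ.image (hf.iterate n)).isClosed
  by_cases hcase : ∀ ε > (0 : ℝ), ∃ m, n ≤ m ∧ ∃ y : M, dist (f^[m] y) x < ε
  · -- Case 1: arbitrarily deep points of the attractor accumulate at x.
    rw [← hKcl.closure_eq, Metric.mem_closure_iff]
    intro ε hε
    obtain ⟨m, hm, y, hy⟩ := hcase ε hε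
    exact ⟨f^[m] y, hKmono m n hm ⟨y, trivial, rfl⟩, by simpa [dist_comm] using hy⟩
  · -- Case 2: return times are bounded; x is periodic.
    push_neg at hcase
    obtain ⟨ε, hε, hεnone⟩ := hcase
    have hper : ∃ m, 1 ≤ m ∧ f^[m] x = x := by
      by_contra hnp
      push_neg at hnp
      -- for each 1 ≤ m < n, a radius preventing an m-step return
      have key : ∀ m : ℕ, ∃ δ > (0 : ℝ),
          1 ≤ m → ∀ y : M, dist y x < δ → ¬ dist (f^[m] y) x < δ := by
        intro m
        rcases Nat.eq_zero_or_pos m with rfl | hm1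
        · exact ⟨1, one_pos, by omega⟩
        have hd : 0 < dist (f^[m] x) x :=
          dist_pos.mpr (hnp m hm1)
        obtain ⟨δ₀, hδ₀, hδ₀c⟩ :=
          Metric.continuous_iff.mp (hf.iterate m) x (dist (f^[m] x) x / 2) (by positivity)
        refine ⟨min δ₀ (dist (f^[m] x) x / 2), by positivity, fun _ y hy hret => ?_⟩
        have h1 : dist (f^[m] y) (f^[m] x) < dist (f^[m] x) x / 2 :=
          hδ₀c y (lt_of_lt_of_le hy (min_le_left _ _))
        have h2 : dist (f^[m] y) x < dist (f^[m] x) x / 2 :=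
          lt_of_lt_of_le hret (min_le_right _ _)
        have := dist_triangle (f^[m] x) (f^[m] y) x
        rw [dist_comm (f^[m] x) (f^[m] y)] at this
        linarith
      choose δfun hδpos hδ using key
      set s : Finset ℕ := insert 1 (Finset.Ico 1 n) with hs
      have hsne : s.Nonempty := ⟨1, Finset.mem_insert_self _ _⟩
      set Δ : ℝ := min ε (s.inf' hsne δfun) with hΔ
      have hΔpos : 0 < Δ := by
        apply lt_min hε
        rw [Finset.lt_inf'_iff]
        exact fun m _ => hδpos m
      obtain ⟨m, hm1, z, hz⟩ := hx (Metric.ball x Δ) Metric.isOpen_ball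
        (Metric.mem_ball_self hΔpos)
      obtain ⟨⟨y, hyU, rfl⟩, hzU⟩ := hz
      rcases le_or_gt n m with hmn | hmn
      · exact absurd (lt_of_lt_of_le hzU (min_le_left _ _)) (not_lt.mpr (hεnone m hmn y))
      · have hms : m ∈ s := Finset.mem_insert_of_mem (Finset.mem_Ico.mpr ⟨hm1, hmn⟩)
        have hΔle : Δ ≤ δfun m := (min_le_right _ _).trans (Finset.inf'_le _ hms)
        exact hδ m hm1 y (lt_of_lt_of_le hyU hΔle) (lt_of_lt_of_le hzU hΔle)
    obtain ⟨m, hm1, hmfix⟩ := hper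
    have hfix : f^[m * n] x = x := by
      rw [Function.iterate_mul]
      exact Function.iterate_fixed hmfix n
    exact hKmono (m * n) n (Nat.le_mul_of_pos_left n hm1) ⟨x, trivial, hfix⟩
end

section
/- Let M be a topological space and f : M → M a continuous map whose periodic points are dense in its nonwandering set Ω_f. Then the nonwandering set of the shift F : M_F → M_F is exactly Ω_F := Ω_f^ℤ ∩ M_F. -/
lemma coord_iterate_aux {M : Type*} (f : M → M)
    (x : {x : ℤ → M // ∀ i : ℤ, f (x i) = x (i + 1)}) (j : ℤ) (n : ℕ) :
    f^[n] (x.val j) = x.val (j + n) := by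
  induction n with
  | zero => simp
  | succ n ih =>
    rw [Function.iterate_succ_apply', ih, x.property]
    push_cast
    ring_nf

lemma shift_iterate_aux {M : Type*} (f : M → M) (n : ℕ) :
    ∀ (x : {x : ℤ → M // ∀ i : ℤ, f (x i) = x (i + 1)}) (i : ℤ),
      ((shiftMap f)^[n] x).val i = x.val (i + n) := by
  induction n with
  | zero => intro x i; simp
  | succ n ih =>
    intro x i
    rw [Function.iterate_succ_apply, ih]
    show x.val (i + n + 1) = _
    push_cast
    ring_nf

/-- If the periodic points of `f` are dense in its nonwandering set `Ω_f`, then the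
nonwandering set of the shift `F : M_F → M_F` is exactly `Ω_F = Ω_f^ℤ ∩ M_F`. -/
theorem nonwandering_of_shift_eq
    {M : Type*} [TopologicalSpace M] (f : M → M) (hf : Continuous f)
    (hdense : nonwanderingSet f ⊆ closure (Function.periodicPts f)) :
    nonwanderingSet (shiftMap f) =
      {x : {x : ℤ → M // ∀ i : ℤ, f (x i) = x (i + 1)} |
        ∀ j : ℤ, x.val j ∈ nonwanderingSet f} := by
  ext x
  simp only [Set.mem_setOf_eq]
  constructor
  · -- easy direction
    intro hx j U hU hxU
    set V : Set {x : ℤ → M // ∀ i : ℤ, f (x i) = x (i + 1)} :=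
      Subtype.val ⁻¹' ((fun y : ℤ → M => y j) ⁻¹' U) with hVdef
    have hVopen : IsOpen V := (hU.preimage (continuous_apply j)).preimage continuous_subtype_val
    have hxV : x ∈ V := hxU
    obtain ⟨n, hn, z, ⟨y, hyV, rfl⟩, hz⟩ := hx V hVopen hxV
    refine ⟨n, hn, f^[n] (y.val j), ⟨y.val j, hyV, rfl⟩, ?_⟩
    have : f^[n] (y.val j) = y.val (j + n) := coord_iterate_aux f y j n
    rw [this]
    have : ((shiftMap f)^[n] y).val j = y.val (j + n) := shift_iterate_aux f n y j
    rw [← this]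
    exact hz
  · -- hard direction
    intro hx V hV hxV
    rw [isOpen_induced_iff] at hV
    obtain ⟨W, hW, rfl⟩ := hV
    rw [isOpen_pi_iff] at hW
    obtain ⟨S, u, hu, hsub⟩ := hW x.val hxV
    -- lower bound of S
    set B : ℕ := S.sup (fun j => j.natAbs) with hB
    set j0 : ℤ := -(B : ℤ) with hj0
    have hj0le : ∀ j ∈ S, j0 ≤ j := by
      intro j hj
      have : j.natAbs ≤ B := Finset.le_sup (f := fun j => j.natAbs) hj
      omega
    -- the pulled-back open set at coordinate j0
    set W0 : Set M := ⋂ j ∈ S, f^[(j - j0).toNat] ⁻¹' u j with hW0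
    have hW0open : IsOpen W0 := by
      refine isOpen_biInter_finset fun j hj => (hu j hj).1.preimage (hf.iterate _)
    have hxW0 : x.val j0 ∈ W0 := by
      refine Set.mem_iInter₂.2 fun j hj => ?_
      have h1 : f^[(j - j0).toNat] (x.val j0) = x.val (j0 + (j - j0).toNat) :=
        coord_iterate_aux f x j0 _
      have h2 : j0 + ((j - j0).toNat : ℤ) = j := by
        have := hj0le j hj; omega
      simp only [Set.mem_preimage, h1, h2]
      exact (hu j hj).2
    -- find a periodic point in W0
    have hxΩ : x.val j0 ∈ closure (Function.periodicPts f) := hdense (hx j0)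
    obtain ⟨p, hpW0, hpper⟩ := mem_closure_iff.1 hxΩ W0 hW0open hxW0
    obtain ⟨k, hk, hpk⟩ := hpper
    have hpk' : f^[k] p = p := hpk
    -- build the periodic orbit
    set y : ℤ → M := fun i => f^[((i - j0) % (k : ℤ)).toNat] p with hy
    have hyprop : ∀ i : ℤ, f (y i) = y (i + 1) := by
      intro i
      have hr0 : 0 ≤ (i - j0) % (k : ℤ) := Int.emod_nonneg _ (by omega)
      have hrk : (i - j0) % (k : ℤ) < k := Int.emod_lt_of_pos _ (by omega)
      have hstep : (i + 1 - j0) % (k : ℤ) = ((i - j0) % (k : ℤ) + 1) % (k : ℤ) := by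
        rw [show i + 1 - j0 = (i - j0) + 1 by ring, ← Int.emod_add_emod]
      rcases lt_or_eq_of_le (by omega : (i - j0) % (k : ℤ) + 1 ≤ k) with h | h
      · have : (i + 1 - j0) % (k : ℤ) = (i - j0) % (k : ℤ) + 1 := by
          rw [hstep, Int.emod_eq_of_lt (by omega) h]
        simp only [hy, this]
        rw [show ((i - j0) % (k : ℤ) + 1).toNat = ((i - j0) % (k : ℤ)).toNat + 1 by omega,
          Function.iterate_succ_apply']
      · have : (i + 1 - j0) % (k : ℤ) = 0 := by
          rw [hstep, h, Int.emod_self]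
        simp only [hy, this]
        rw [show ((i - j0) % (k : ℤ)).toNat = k - 1 by omega]
        show f (f^[k-1] p) = f^[0] p
        have h2 := Function.iterate_succ_apply' f (k-1) p
        rw [Nat.succ_eq_add_one, show k - 1 + 1 = k by omega] at h2
        rw [← h2, hpk']
        simp
    set Y : {x : ℤ → M // ∀ i : ℤ, f (x i) = x (i + 1)} := ⟨y, hyprop⟩ with hYdef
    -- y at j0 + m is f^[m] p
    have hym : ∀ m : ℕ, y (j0 + m) = f^[m] p := by
      intro m
      induction m with
      | zero => simp [hy]
      | succ m ih =>
        have : (j0 + (m + 1 : ℕ) : ℤ) = (j0 + m) + 1 := by push_cast; ring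
        rw [this, ← hyprop (j0 + m), ih]
        exact (Function.iterate_succ_apply' f m p).symm
    -- Y ∈ V
    have hYV : Y ∈ Subtype.val ⁻¹' W := by
      apply hsub
      intro j hj
      have hle := hj0le j hj
      have hYj : Y.val j = f^[(j - j0).toNat] p := by
        have h3 := hym (j - j0).toNat
        rwa [show j0 + (((j - j0).toNat : ℕ) : ℤ) = j by omega] at h3
      rw [hYj]
      exact Set.mem_iInter₂.1 hpW0 j hj
    -- Y is periodic under the shift with period k
    have hYper : (shiftMap f)^[k] Y = Y := by
      apply Subtype.ext
      funext i
      rw [shift_iterate_aux f k Y i]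
      show y (i + k) = y i
      simp only [hy]
      congr 2
      rw [show i + (k : ℤ) - j0 = (i - j0) + (k : ℤ) * 1 by ring, Int.add_mul_emod_self_left]
    exact ⟨k, hk, Y, ⟨Y, hYV, hYper⟩, hYV⟩
end
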